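/- arXiv:2507.08918 — 3 statements merged into one kernel-verified Lean document; each statement's English description precedes it below -/
import Mathlib

section
/- Under the interactive fixed effects data generating process, the exact fit assumption, and invertibility of the Gram matrix of pre-treatment common factors, the estimation error of the synthetic-control ATT estimate in the single post-treatment period T = T0 + 1 satisfies: tau_hat - tau = (1/n1) * [lambda_T * (lambda_pre' lambda_pre)^{-1} * lambda_pre' * sum over treated i of (sum over donors j of w_hat_{ij} * eps_{j,pre} - eps_{i,pre})] + (1/n1) * [sum over treated i of (eps_{iT} - sum over donors j of w_hat_{ij} * eps_{jT})], where eps_{i,pre} denotes the (T0 x 1) vector of error terms of unit i over the pre-treatment periods. -/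
open Matrix

/-- Abadie's representation: under the interactive fixed effects DGP, the exact
fit assumption, and invertibility of the Gram matrix of pre-treatment common factors, the
estimation error of the synthetic-control ATT estimate in the single post-treatment period
`T = T0 + 1` satisfies
`τ̂ - τ = (1/n1) * [λ_T (λ_pre' λ_pre)⁻¹ λ_pre' ∑_i (∑_j ŵ_{ij} ε_{j,pre} - ε_{i,pre})]
        + (1/n1) * [∑_i (ε_{iT} - ∑_j ŵ_{ij} ε_{jT})]`. -/
theorem abadie_representation (n0 n1 T0 F K : ℕ) (hn1 : 0 < n1) (hT0 : 0 < T0)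
    -- time-varying coefficients and common factors over periods 1,...,T0 and T = T0+1
    (θ : Fin (T0 + 1) → Fin K → ℝ) (Λ : Fin (T0 + 1) → Fin F → ℝ)
    -- covariates, factor loadings and errors of the donors (`d`) and treated units (`t`)
    (xd : Fin n0 → Fin K → ℝ) (xt : Fin n1 → Fin K → ℝ)
    (mud : Fin n0 → Fin F → ℝ) (muT : Fin n1 → Fin F → ℝ)
    (epsd : Fin n0 → Fin (T0 + 1) → ℝ) (epst : Fin n1 → Fin (T0 + 1) → ℝ)
    -- untreated potential outcomes, generated by the interactive fixed effects model
    (y0d : Fin n0 → Fin (T0 + 1) → ℝ) (y0t : Fin n1 → Fin (T0 + 1) → ℝ)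
    (hy0d : ∀ j t, y0d j t = (∑ k, θ t k * xd j k) + (∑ f, Λ t f * mud j f) + epsd j t)
    (hy0t : ∀ i t, y0t i t = (∑ k, θ t k * xt i k) + (∑ f, Λ t f * muT i f) + epst i t)
    -- observed treated outcomes at time T
    (y1 : Fin n1 → ℝ)
    -- the weights
    (w : Fin n1 → Fin n0 → ℝ)
    -- the matrix of pre-treatment common factors, and invertibility of its Gram matrix
    (lpre : Matrix (Fin T0) (Fin F) ℝ) (hlpre : ∀ t f, lpre t f = Λ t.castSucc f)
    (hinv : IsUnit (lpreᵀ * lpre).det)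
    -- Exact Fit: for outcomes in pre-treatment periods, and for covariates
    (hfit_y : ∀ i (t : Fin T0), y0t i t.castSucc = ∑ j, w i j * y0d j t.castSucc)
    (hfit_x : ∀ i k, xt i k = ∑ j, w i j * xd j k)
    -- true and estimated ATT in the post-treatment period T
    (τ τhat : ℝ)
    (hτ : τ = (1 / (n1 : ℝ)) * ∑ i, (y1 i - y0t i (Fin.last T0)))
    (hτhat : τhat = (1 / (n1 : ℝ)) * ∑ i, (y1 i - ∑ j, w i j * y0d j (Fin.last T0))) :
    τhat - τ =
      (1 / (n1 : ℝ)) *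
        ((fun f => Λ (Fin.last T0) f) ⬝ᵥ
          (((lpreᵀ * lpre)⁻¹ * lpreᵀ) *ᵥ
            (fun t : Fin T0 =>
              ∑ i, ((∑ j, w i j * epsd j t.castSucc) - epst i t.castSucc))))
      + (1 / (n1 : ℝ)) *
          ∑ i, (epst i (Fin.last T0) - ∑ j, w i j * epsd j (Fin.last T0)) := by
  set S : Fin F → ℝ := fun f => ∑ i, (muT i f - ∑ j, w i j * mud j f) with hS
  set E : Fin T0 → ℝ := fun t => ∑ i, ((∑ j, w i j * epsd j t.castSucc) - epst i t.castSucc)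
    with hE
  -- step 1: covariate terms cancel
  have hcov : ∀ (i : Fin n1) (t : Fin (T0+1)),
      (∑ k, θ t k * xt i k) = ∑ j, w i j * ∑ k, θ t k * xd j k := by
    intro i t
    simp_rw [hfit_x, Finset.mul_sum]
    rw [Finset.sum_comm]
    congr 1; ext j; congr 1; ext k; ring
  -- step 2: lpre *ᵥ S = E
  have hSE : lpre *ᵥ S = E := by
    funext t
    have h := fun i => hfit_y i t
    simp only [hy0t, hy0d] at h
    have h2 : ∀ i : Fin n1, (∑ f, Λ t.castSucc f * (muT i f - ∑ j, w i j * mud j f))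
        = (∑ j, w i j * epsd j t.castSucc) - epst i t.castSucc := by
      intro i
      have hi := h i
      rw [hcov i t.castSucc] at hi
      have hexp : ∑ j, w i j * ((∑ k, θ t.castSucc k * xd j k) +
          (∑ f, Λ t.castSucc f * mud j f) + epsd j t.castSucc)
          = (∑ j, w i j * ∑ k, θ t.castSucc k * xd j k)
          + (∑ j, w i j * ∑ f, Λ t.castSucc f * mud j f)
          + ∑ j, w i j * epsd j t.castSucc := by
        rw [← Finset.sum_add_distrib, ← Finset.sum_add_distrib]
        congr 1; ext j; ring
      rw [hexp] at hi
      have hswap : ∑ j, w i j * ∑ f, Λ t.castSucc f * mud j f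
          = ∑ f, Λ t.castSucc f * ∑ j, w i j * mud j f := by
        simp_rw [Finset.mul_sum]
        rw [Finset.sum_comm]
        congr 1; ext f; congr 1; ext j; ring
      rw [hswap] at hi
      simp_rw [mul_sub, Finset.sum_sub_distrib]
      linarith [hi]
    show (lpre *ᵥ S) t = E t
    simp only [Matrix.mulVec, dotProduct, hS, hE]
    calc ∑ f, lpre t f * ∑ i, (muT i f - ∑ j, w i j * mud j f)
        = ∑ i, ∑ f, Λ t.castSucc f * (muT i f - ∑ j, w i j * mud j f) := by
          simp_rw [hlpre, Finset.mul_sum]; rw [Finset.sum_comm]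
      _ = ∑ i, ((∑ j, w i j * epsd j t.castSucc) - epst i t.castSucc) :=
          Finset.sum_congr rfl fun i _ => h2 i
  -- step 3: solve for S
  have hSsolve : S = ((lpreᵀ * lpre)⁻¹ * lpreᵀ) *ᵥ E := by
    have h1 : (lpreᵀ * lpre) *ᵥ S = lpreᵀ *ᵥ E := by
      rw [← Matrix.mulVec_mulVec, hSE]
    have h2 : ((lpreᵀ * lpre)⁻¹ * (lpreᵀ * lpre)) *ᵥ S
        = (lpreᵀ * lpre)⁻¹ *ᵥ (lpreᵀ *ᵥ E) := by
      rw [← Matrix.mulVec_mulVec, h1]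
    rwa [Matrix.nonsing_inv_mul _ hinv, Matrix.one_mulVec, Matrix.mulVec_mulVec] at h2
  -- step 4: final computation
  have hterm : ∀ i : Fin n1,
      y0t i (Fin.last T0) - ∑ j, w i j * y0d j (Fin.last T0)
      = (∑ f, Λ (Fin.last T0) f * (muT i f - ∑ j, w i j * mud j f))
        + (epst i (Fin.last T0) - ∑ j, w i j * epsd j (Fin.last T0)) := by
    intro i
    rw [hy0t]
    simp_rw [hy0d]
    rw [hcov i (Fin.last T0)]
    have hexp : ∑ j, w i j * ((∑ k, θ (Fin.last T0) k * xd j k) +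
        (∑ f, Λ (Fin.last T0) f * mud j f) + epsd j (Fin.last T0))
        = (∑ j, w i j * ∑ k, θ (Fin.last T0) k * xd j k)
        + (∑ j, w i j * ∑ f, Λ (Fin.last T0) f * mud j f)
        + ∑ j, w i j * epsd j (Fin.last T0) := by
      rw [← Finset.sum_add_distrib, ← Finset.sum_add_distrib]
      congr 1; ext j; ring
    rw [hexp]
    have hswap : ∑ j, w i j * ∑ f, Λ (Fin.last T0) f * mud j f
        = ∑ f, Λ (Fin.last T0) f * ∑ j, w i j * mud j f := by
      simp_rw [Finset.mul_sum]
      rw [Finset.sum_comm]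
      congr 1; ext f; congr 1; ext j; ring
    rw [hswap]
    simp_rw [mul_sub, Finset.sum_sub_distrib]
    ring
  have hsum : ∑ i, (y0t i (Fin.last T0) - ∑ j, w i j * y0d j (Fin.last T0))
      = ((fun f => Λ (Fin.last T0) f) ⬝ᵥ (((lpreᵀ * lpre)⁻¹ * lpreᵀ) *ᵥ E))
      + ∑ i, (epst i (Fin.last T0) - ∑ j, w i j * epsd j (Fin.last T0)) := by
    rw [← hSsolve]
    simp_rw [hterm]
    rw [Finset.sum_add_distrib]
    congr 1
    simp only [dotProduct, hS]
    rw [Finset.sum_comm]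
    simp_rw [Finset.mul_sum]
  have hdiff : τhat - τ = (1 / (n1 : ℝ)) *
      ∑ i, (y0t i (Fin.last T0) - ∑ j, w i j * y0d j (Fin.last T0)) := by
    rw [hτ, hτhat, ← mul_sub, ← Finset.sum_sub_distrib]
    congr 1; apply Finset.sum_congr rfl; intro i _; ring
  rw [hdiff, hsum, mul_add]
end

section
/- Let N >= 2 and T >= 2, and let H be the ((N-1)+(T-1)) x ((N-1)+(T-1)) block matrix [[T * I_{N-1}, 1_{(N-1) x (T-1)}], [1_{(T-1) x (N-1)}, N * I_{T-1}]]. Then H is invertible and its inverse is the block matrix [[ (1/T) * (I_{N-1} + ((T-1)/(T+N-1)) * 1_{(N-1) x (N-1)}), -(1/(T+N-1)) * 1_{(N-1) x (T-1)} ], [ -(1/(T+N-1)) * 1_{(T-1) x (N-1)}, (1/N) * (I_{T-1} + ((N-1)/(T+N-1)) * 1_{(T-1) x (T-1)}) ]]. -/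
open Matrix

/-- for `N ≥ 2` and `T ≥ 2`, the block matrix
`H = [[T I_{N-1}, 1_{(N-1)×(T-1)}], [1_{(T-1)×(N-1)}, N I_{T-1}]]` is invertible, with inverse
`[[ (1/T)(I_{N-1} + ((T-1)/(T+N-1)) 1_{(N-1)×(N-1)}), -(1/(T+N-1)) 1_{(N-1)×(T-1)} ],
  [ -(1/(T+N-1)) 1_{(T-1)×(N-1)}, (1/N)(I_{T-1} + ((N-1)/(T+N-1)) 1_{(T-1)×(T-1)}) ]]`. -/
theorem block_H_inverse (N T : ℕ) (hN : 2 ≤ N) (hT : 2 ≤ T) :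
    IsUnit (Matrix.fromBlocks
        ((T : ℝ) • (1 : Matrix (Fin (N - 1)) (Fin (N - 1)) ℝ))
        (Matrix.of fun (_ : Fin (N - 1)) (_ : Fin (T - 1)) => (1 : ℝ))
        (Matrix.of fun (_ : Fin (T - 1)) (_ : Fin (N - 1)) => (1 : ℝ))
        ((N : ℝ) • (1 : Matrix (Fin (T - 1)) (Fin (T - 1)) ℝ))) ∧
    (Matrix.fromBlocks
        ((T : ℝ) • (1 : Matrix (Fin (N - 1)) (Fin (N - 1)) ℝ))
        (Matrix.of fun (_ : Fin (N - 1)) (_ : Fin (T - 1)) => (1 : ℝ))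
        (Matrix.of fun (_ : Fin (T - 1)) (_ : Fin (N - 1)) => (1 : ℝ))
        ((N : ℝ) • (1 : Matrix (Fin (T - 1)) (Fin (T - 1)) ℝ)))⁻¹ =
      Matrix.fromBlocks
        ((1 / (T : ℝ)) • ((1 : Matrix (Fin (N - 1)) (Fin (N - 1)) ℝ) +
          (((T : ℝ) - 1) / ((T : ℝ) + (N : ℝ) - 1)) •
            Matrix.of fun (_ : Fin (N - 1)) (_ : Fin (N - 1)) => (1 : ℝ)))
        ((-(1 / ((T : ℝ) + (N : ℝ) - 1))) •
          Matrix.of fun (_ : Fin (N - 1)) (_ : Fin (T - 1)) => (1 : ℝ))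
        ((-(1 / ((T : ℝ) + (N : ℝ) - 1))) •
          Matrix.of fun (_ : Fin (T - 1)) (_ : Fin (N - 1)) => (1 : ℝ))
        ((1 / (N : ℝ)) • ((1 : Matrix (Fin (T - 1)) (Fin (T - 1)) ℝ) +
          (((N : ℝ) - 1) / ((T : ℝ) + (N : ℝ) - 1)) •
            Matrix.of fun (_ : Fin (T - 1)) (_ : Fin (T - 1)) => (1 : ℝ))) := by
  have hT0 : (T : ℝ) ≠ 0 := by positivity
  have hN0 : (N : ℝ) ≠ 0 := by positivity
  have hS : (T : ℝ) + (N : ℝ) - 1 ≠ 0 := by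
    have : (2 : ℝ) ≤ T := by exact_mod_cast hT
    have : (2 : ℝ) ≤ N := by exact_mod_cast hN
    nlinarith
  have hcN : ((N - 1 : ℕ) : ℝ) = (N : ℝ) - 1 := by
    rw [Nat.cast_sub (by omega)]; norm_num
  have hcT : ((T - 1 : ℕ) : ℝ) = (T : ℝ) - 1 := by
    rw [Nat.cast_sub (by omega)]; norm_num
  have key : (Matrix.fromBlocks
        ((T : ℝ) • (1 : Matrix (Fin (N - 1)) (Fin (N - 1)) ℝ))
        (Matrix.of fun (_ : Fin (N - 1)) (_ : Fin (T - 1)) => (1 : ℝ))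
        (Matrix.of fun (_ : Fin (T - 1)) (_ : Fin (N - 1)) => (1 : ℝ))
        ((N : ℝ) • (1 : Matrix (Fin (T - 1)) (Fin (T - 1)) ℝ))) *
      (Matrix.fromBlocks
        ((1 / (T : ℝ)) • ((1 : Matrix (Fin (N - 1)) (Fin (N - 1)) ℝ) +
          (((T : ℝ) - 1) / ((T : ℝ) + (N : ℝ) - 1)) •
            Matrix.of fun (_ : Fin (N - 1)) (_ : Fin (N - 1)) => (1 : ℝ)))
        ((-(1 / ((T : ℝ) + (N : ℝ) - 1))) •
          Matrix.of fun (_ : Fin (N - 1)) (_ : Fin (T - 1)) => (1 : ℝ))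
        ((-(1 / ((T : ℝ) + (N : ℝ) - 1))) •
          Matrix.of fun (_ : Fin (T - 1)) (_ : Fin (N - 1)) => (1 : ℝ))
        ((1 / (N : ℝ)) • ((1 : Matrix (Fin (T - 1)) (Fin (T - 1)) ℝ) +
          (((N : ℝ) - 1) / ((T : ℝ) + (N : ℝ) - 1)) •
            Matrix.of fun (_ : Fin (T - 1)) (_ : Fin (T - 1)) => (1 : ℝ)))) = 1 := by
    ext i j
    rcases i with i | i <;> rcases j with j | j <;>
      simp [Matrix.mul_apply, Matrix.fromBlocks, Matrix.one_apply, Finset.sum_ite_eq',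
        Finset.mul_sum, Finset.sum_add_distrib, mul_add, add_mul,
        Finset.sum_const, hcN, hcT] <;>
      [skip; skip; skip; skip]
    · by_cases h : i = j <;> simp [h] <;> field_simp <;> ring
    · field_simp; ring
    · field_simp; ring
    · by_cases h : i = j <;> simp [h] <;> field_simp <;> ring
  exact ⟨IsUnit.of_mul_eq_one _ key, Matrix.inv_eq_right_inv key⟩
end

section
/- Let n0 >= 1, n1 >= 1, N = n0 + n1, T >= 2, let Z be the NT x (1 + (N-1) + (T-1)) two-way fixed effects design matrix, let M = I_{NT} - Z (Z'Z)^{-1} Z', and let D in R^{NT} be the vector whose (i,t) entry equals 1 if i > n0 and t = T, and 0 otherwise. Then the quadratic form D' M D equals (T-1) * n0 * n1 / ((n0 + n1) * T). -/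
open Matrix

/-- The two-way fixed effects design matrix: rows indexed by pairs `(i, t)` of a unit and a
time period; columns consist of an intercept column of ones, unit dummies for units `i ≠ 0`,
and time dummies for periods `t ≠ 0`. -/
def designZ (N T : ℕ) :
    Matrix (Fin N × Fin T) (Unit ⊕ ({j : Fin N // (j : ℕ) ≠ 0} ⊕ {s : Fin T // (s : ℕ) ≠ 0})) ℝ :=
  fun p c =>
    match c with
    | Sum.inl _ => 1
    | Sum.inr (Sum.inl j) => if p.1 = j.1 then 1 else 0
    | Sum.inr (Sum.inr s) => if p.2 = s.1 then 1 else 0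

/- ---------------- auxiliary definitions ---------------- -/

/-- Treatment indicator vector. -/
def Dvec (n0 n1 T : ℕ) : Fin (n0 + n1) × Fin T → ℝ :=
  fun p => if n0 ≤ (p.1 : ℕ) ∧ (p.2 : ℕ) = T - 1 then (1 : ℝ) else 0

/-- Projection of `Dvec` onto the column space of `designZ`. -/
noncomputable def dhatVec (n0 n1 T : ℕ) : Fin (n0 + n1) × Fin T → ℝ :=
  fun p => (if n0 ≤ (p.1 : ℕ) then 1 / (T : ℝ) else 0) +
    (if (p.2 : ℕ) = T - 1 then (n1 : ℝ) / ((n0 : ℝ) + n1) else 0) -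
    (n1 : ℝ) / (((n0 : ℝ) + n1) * T)

/-- Coordinates of the projection. -/
noncomputable def betaVec (n0 n1 T : ℕ) :
    Unit ⊕ ({j : Fin (n0 + n1) // (j : ℕ) ≠ 0} ⊕ {s : Fin T // (s : ℕ) ≠ 0}) → ℝ
  | Sum.inl _ => -((n1 : ℝ) / (((n0 : ℝ) + n1) * T))
  | Sum.inr (Sum.inl j) => if n0 ≤ ((j : Fin (n0 + n1)) : ℕ) then 1 / (T : ℝ) else 0
  | Sum.inr (Sum.inr s) => if ((s : Fin T) : ℕ) = T - 1 then (n1 : ℝ) / ((n0 : ℝ) + n1) else 0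

/- ---------------- sum helpers ---------------- -/

lemma sum_indic_le (n0 n1 : ℕ) (a b : ℝ) :
    ∑ i : Fin (n0 + n1), (if n0 ≤ (i : ℕ) then a else b) = n1 * a + n0 * b := by
  rw [Fin.sum_univ_eq_sum_range (fun k => if n0 ≤ k then a else b),
    Finset.range_eq_Ico, ← Finset.sum_Ico_consecutive _ (Nat.zero_le n0) (Nat.le_add_right n0 n1)]
  have h1 : ∑ k ∈ Finset.Ico 0 n0, (if n0 ≤ k then a else b) = n0 * b := by
    rw [Finset.sum_congr rfl (fun k hk => if_neg (by simp only [Finset.mem_Ico] at hk; omega))]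
    simp [Nat.card_Ico]
  have h2 : ∑ k ∈ Finset.Ico n0 (n0 + n1), (if n0 ≤ k then a else b) = n1 * a := by
    rw [Finset.sum_congr rfl (fun k hk => if_pos (by simp only [Finset.mem_Ico] at hk; omega))]
    simp [Nat.card_Ico]
  rw [h1, h2]; ring

lemma sum_indic_last (T : ℕ) (hT : 1 ≤ T) (a b : ℝ) :
    ∑ t : Fin T, (if (t : ℕ) = T - 1 then a else b) = a + ((T : ℝ) - 1) * b := by
  have h : ∀ t : Fin T, (if (t : ℕ) = T - 1 then a else b) =
      b + (if t = (⟨T - 1, by omega⟩ : Fin T) then a - b else 0) := by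
    intro t
    by_cases ht : (t : ℕ) = T - 1
    · rw [if_pos ht, if_pos (Fin.ext ht)]; ring
    · rw [if_neg ht, if_neg (fun he => ht (by rw [he]))]; ring
  rw [Finset.sum_congr rfl (fun t _ => h t), Finset.sum_add_distrib, Finset.sum_const,
    Finset.sum_ite_eq' Finset.univ _ (fun _ => a - b)]
  have hT1 : 1 ≤ (T : ℝ) := by exact_mod_cast hT
  simp [Finset.card_univ]
  ring

/-- Evaluation of `designZ *ᵥ x`. -/
lemma designZ_mulVec_apply (N T : ℕ) (x : Unit ⊕ ({j : Fin N // (j : ℕ) ≠ 0} ⊕ {s : Fin T // (s : ℕ) ≠ 0}) → ℝ)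
    (p : Fin N × Fin T) :
    (designZ N T *ᵥ x) p = x (Sum.inl ()) +
      ((if h : (p.1 : ℕ) ≠ 0 then x (Sum.inr (Sum.inl ⟨p.1, h⟩)) else 0) +
       (if h : (p.2 : ℕ) ≠ 0 then x (Sum.inr (Sum.inr ⟨p.2, h⟩)) else 0)) := by
  have hsub : ∀ (n : ℕ) (i : Fin n) (f : {j : Fin n // (j : ℕ) ≠ 0} → ℝ),
      (∑ j : {j : Fin n // (j : ℕ) ≠ 0}, if i = (j : Fin n) then f j else 0) =
        if h : (i : ℕ) ≠ 0 then f ⟨i, h⟩ else 0 := by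
    intro n i f
    split
    · next h =>
      have hs := Finset.sum_eq_single (s := Finset.univ)
        (f := fun j : {j : Fin n // (j : ℕ) ≠ 0} => if i = ↑j then f j else 0)
        (⟨i, h⟩ : {j : Fin n // (j : ℕ) ≠ 0})
        (fun j _ hj => if_neg (fun he => hj (Subtype.ext he.symm)))
        (fun hmem => absurd (Finset.mem_univ _) hmem)
      simpa using hs
    · next h =>
      push_neg at h
      refine Finset.sum_eq_zero (fun j _ => if_neg (fun he => j.2 (by rw [← he, h])))
  simp only [mulVec, dotProduct, Fintype.sum_sum_type, designZ, ite_mul, one_mul, zero_mul]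
  rw [hsub, hsub]
  simp

/- ---------------- residual orthogonality ---------------- -/

lemma rowsum (n0 n1 T : ℕ) (hn0 : 1 ≤ n0) (hn1 : 1 ≤ n1) (hT : 2 ≤ T) (i : Fin (n0 + n1)) :
    ∑ t : Fin T, (Dvec n0 n1 T (i, t) - dhatVec n0 n1 T (i, t)) = 0 := by
  have hT0 : (T : ℝ) ≠ 0 := by positivity
  have hN0 : (n0 : ℝ) + n1 ≠ 0 := by positivity
  by_cases hi : n0 ≤ (i : ℕ)
  · have h : ∀ t : Fin T, Dvec n0 n1 T (i, t) - dhatVec n0 n1 T (i, t) =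
        if (t : ℕ) = T - 1 then
          (1 - 1 / (T : ℝ) - (n1 : ℝ) / ((n0 : ℝ) + n1) + (n1 : ℝ) / (((n0 : ℝ) + n1) * T))
        else (-(1 / (T : ℝ)) + (n1 : ℝ) / (((n0 : ℝ) + n1) * T)) := by
      intro t
      by_cases ht : (t : ℕ) = T - 1 <;> simp [Dvec, dhatVec, hi, ht] <;> ring
    rw [Finset.sum_congr rfl (fun t _ => h t), sum_indic_last T (by omega)]
    field_simp
    ring
  · have h : ∀ t : Fin T, Dvec n0 n1 T (i, t) - dhatVec n0 n1 T (i, t) =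
        if (t : ℕ) = T - 1 then
          ((n1 : ℝ) / (((n0 : ℝ) + n1) * T) - (n1 : ℝ) / ((n0 : ℝ) + n1))
        else (n1 : ℝ) / (((n0 : ℝ) + n1) * T) := by
      intro t
      by_cases ht : (t : ℕ) = T - 1 <;> simp [Dvec, dhatVec, hi, ht] <;> ring
    rw [Finset.sum_congr rfl (fun t _ => h t), sum_indic_last T (by omega)]
    field_simp
    ring

lemma colsum (n0 n1 T : ℕ) (hn0 : 1 ≤ n0) (hn1 : 1 ≤ n1) (hT : 2 ≤ T) (s : Fin T) :
    ∑ i : Fin (n0 + n1), (Dvec n0 n1 T (i, s) - dhatVec n0 n1 T (i, s)) = 0 := by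
  have hT0 : (T : ℝ) ≠ 0 := by positivity
  have hN0 : (n0 : ℝ) + n1 ≠ 0 := by positivity
  by_cases hs : (s : ℕ) = T - 1
  · have h : ∀ i : Fin (n0 + n1), Dvec n0 n1 T (i, s) - dhatVec n0 n1 T (i, s) =
        if n0 ≤ (i : ℕ) then
          (1 - 1 / (T : ℝ) - (n1 : ℝ) / ((n0 : ℝ) + n1) + (n1 : ℝ) / (((n0 : ℝ) + n1) * T))
        else (-((n1 : ℝ) / ((n0 : ℝ) + n1)) + (n1 : ℝ) / (((n0 : ℝ) + n1) * T)) := by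
      intro i
      by_cases hi : n0 ≤ (i : ℕ) <;> simp [Dvec, dhatVec, hi, hs] <;> ring
    rw [Finset.sum_congr rfl (fun i _ => h i), sum_indic_le]
    field_simp
    ring
  · have h : ∀ i : Fin (n0 + n1), Dvec n0 n1 T (i, s) - dhatVec n0 n1 T (i, s) =
        if n0 ≤ (i : ℕ) then
          (-(1 / (T : ℝ)) + (n1 : ℝ) / (((n0 : ℝ) + n1) * T))
        else (n1 : ℝ) / (((n0 : ℝ) + n1) * T) := by
      intro i
      by_cases hi : n0 ≤ (i : ℕ) <;> simp [Dvec, dhatVec, hi, hs] <;> ring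
    rw [Finset.sum_congr rfl (fun i _ => h i), sum_indic_le]
    field_simp
    ring

lemma key_orth (n0 n1 T : ℕ) (hn0 : 1 ≤ n0) (hn1 : 1 ≤ n1) (hT : 2 ≤ T) :
    (designZ (n0 + n1) T)ᵀ *ᵥ Dvec n0 n1 T = (designZ (n0 + n1) T)ᵀ *ᵥ dhatVec n0 n1 T := by
  rw [← sub_eq_zero, ← mulVec_sub]
  funext c
  have hr : ∀ p : Fin (n0 + n1) × Fin T,
      (Dvec n0 n1 T - dhatVec n0 n1 T) p = Dvec n0 n1 T p - dhatVec n0 n1 T p := fun p => rfl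
  obtain (u | j | s) := c
  · show ∑ p : Fin (n0 + n1) × Fin T,
        (designZ (n0 + n1) T)ᵀ (Sum.inl u) p * (Dvec n0 n1 T - dhatVec n0 n1 T) p = 0
    simp only [transpose_apply, designZ, one_mul, hr, Fintype.sum_prod_type]
    exact Finset.sum_eq_zero (fun i _ => rowsum n0 n1 T hn0 hn1 hT i)
  · show ∑ p : Fin (n0 + n1) × Fin T,
        (designZ (n0 + n1) T)ᵀ (Sum.inr (Sum.inl j)) p * (Dvec n0 n1 T - dhatVec n0 n1 T) p = 0
    simp only [transpose_apply, designZ, hr, Fintype.sum_prod_type]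
    refine Finset.sum_eq_zero (fun i _ => ?_)
    by_cases hij : i = (j : Fin (n0 + n1))
    · simp only [if_pos hij, one_mul]
      exact rowsum n0 n1 T hn0 hn1 hT i
    · simp [hij]
  · show ∑ p : Fin (n0 + n1) × Fin T,
        (designZ (n0 + n1) T)ᵀ (Sum.inr (Sum.inr s)) p * (Dvec n0 n1 T - dhatVec n0 n1 T) p = 0
    simp only [transpose_apply, designZ, hr, Fintype.sum_prod_type_right]
    refine Finset.sum_eq_zero (fun t _ => ?_)
    by_cases hts : t = (s : Fin T)
    · simp only [if_pos hts, one_mul]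
      exact colsum n0 n1 T hn0 hn1 hT t
    · simp [hts]

/- ---------------- the projection is Z β ---------------- -/

lemma key_proj (n0 n1 T : ℕ) (hn0 : 1 ≤ n0) (hT : 2 ≤ T) :
    designZ (n0 + n1) T *ᵥ betaVec n0 n1 T = dhatVec n0 n1 T := by
  funext p
  rw [designZ_mulVec_apply]
  show -((n1 : ℝ) / (((n0 : ℝ) + n1) * T)) + _ = _
  have h1 : (if h : (p.1 : ℕ) ≠ 0 then betaVec n0 n1 T (Sum.inr (Sum.inl ⟨p.1, h⟩)) else 0) =
      if n0 ≤ (p.1 : ℕ) then 1 / (T : ℝ) else 0 := by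
    split
    · rfl
    · next h =>
      push_neg at h
      rw [if_neg (by omega)]
  have h2 : (if h : (p.2 : ℕ) ≠ 0 then betaVec n0 n1 T (Sum.inr (Sum.inr ⟨p.2, h⟩)) else 0) =
      if (p.2 : ℕ) = T - 1 then (n1 : ℝ) / ((n0 : ℝ) + n1) else 0 := by
    split
    · rfl
    · next h =>
      push_neg at h
      rw [if_neg (by omega)]
  rw [h1, h2]
  show _ = _ + _ - _
  ring

/- ---------------- invertibility ---------------- -/

lemma designZ_mulVec_injective (n0 n1 T : ℕ) (hn0 : 1 ≤ n0) (hT : 2 ≤ T)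
    (x : Unit ⊕ ({j : Fin (n0 + n1) // (j : ℕ) ≠ 0} ⊕ {s : Fin T // (s : ℕ) ≠ 0}) → ℝ)
    (hx : designZ (n0 + n1) T *ᵥ x = 0) : x = 0 := by
  have hN : 0 < n0 + n1 := by omega
  have hTpos : 0 < T := by omega
  set i0 : Fin (n0 + n1) := ⟨0, hN⟩
  set t0 : Fin T := ⟨0, hTpos⟩
  have h00 := congrFun hx (i0, t0)
  rw [designZ_mulVec_apply] at h00
  simp only [dif_neg (by simp [i0] : ¬((i0 : ℕ) ≠ 0)), dif_neg (by simp [t0] : ¬((t0 : ℕ) ≠ 0)),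
    Pi.zero_apply, add_zero] at h00
  funext c
  obtain (u | j | s) := c
  · cases u; simpa using h00
  · have h := congrFun hx ((j : Fin (n0 + n1)), t0)
    rw [designZ_mulVec_apply] at h
    simp only [dif_pos j.2, dif_neg (by simp [t0] : ¬((t0 : ℕ) ≠ 0)), Pi.zero_apply,
      add_zero] at h
    rw [h00] at h
    simpa using h
  · have h := congrFun hx (i0, (s : Fin T))
    rw [designZ_mulVec_apply] at h
    simp only [dif_pos s.2, dif_neg (by simp [i0] : ¬((i0 : ℕ) ≠ 0)), Pi.zero_apply,
      zero_add] at h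
    rw [h00] at h
    simpa using h

lemma gram_isUnit_det (n0 n1 T : ℕ) (hn0 : 1 ≤ n0) (hT : 2 ≤ T) :
    IsUnit ((designZ (n0 + n1) T)ᵀ * designZ (n0 + n1) T).det := by
  set Z := designZ (n0 + n1) T
  have hker : ∀ x, (Zᵀ * Z) *ᵥ x = 0 → x = 0 := by
    intro x hx
    refine designZ_mulVec_injective n0 n1 T hn0 hT x ?_
    have hdot : (Z *ᵥ x) ⬝ᵥ (Z *ᵥ x) = 0 := by
      have : x ⬝ᵥ ((Zᵀ * Z) *ᵥ x) = (Z *ᵥ x) ⬝ᵥ (Z *ᵥ x) := by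
        rw [← mulVec_mulVec, dotProduct_mulVec, vecMul_transpose]
      rw [← this, hx, dotProduct_zero]
    exact dotProduct_self_eq_zero.mp hdot
  have hinj : Function.Injective ((Zᵀ * Z).mulVec) := by
    intro a b hab
    have := hker (a - b) (by rw [mulVec_sub, hab, sub_self])
    exact sub_eq_zero.mp this
  exact (Matrix.isUnit_iff_isUnit_det _).mp (mulVec_injective_iff_isUnit.mp hinj)

/- ---------------- final quadratic form value ---------------- -/

lemma final_value (n0 n1 T : ℕ) (hn0 : 1 ≤ n0) (hn1 : 1 ≤ n1) (hT : 2 ≤ T) :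
    Dvec n0 n1 T ⬝ᵥ (Dvec n0 n1 T - dhatVec n0 n1 T) =
      ((T : ℝ) - 1) * n0 * n1 / (((n0 : ℝ) + n1) * T) := by
  have hT0 : (T : ℝ) ≠ 0 := by positivity
  have hN0 : (n0 : ℝ) + n1 ≠ 0 := by positivity
  set c : ℝ := 1 - 1 / (T : ℝ) - (n1 : ℝ) / ((n0 : ℝ) + n1) + (n1 : ℝ) / (((n0 : ℝ) + n1) * T)
    with hc
  have hsummand : ∀ p : Fin (n0 + n1) × Fin T,
      Dvec n0 n1 T p * (Dvec n0 n1 T - dhatVec n0 n1 T) p =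
        if n0 ≤ (p.1 : ℕ) then (if (p.2 : ℕ) = T - 1 then c else 0) else 0 := by
    intro p
    show Dvec n0 n1 T p * (Dvec n0 n1 T p - dhatVec n0 n1 T p) = _
    by_cases h1 : n0 ≤ (p.1 : ℕ) <;> by_cases h2 : (p.2 : ℕ) = T - 1 <;>
      simp [Dvec, dhatVec, h1, h2, hc] <;> ring
  show ∑ p : Fin (n0 + n1) × Fin T, Dvec n0 n1 T p * (Dvec n0 n1 T - dhatVec n0 n1 T) p = _
  rw [Finset.sum_congr rfl (fun p _ => hsummand p)]
  rw [Fintype.sum_prod_type]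
  have hinner : ∀ i : Fin (n0 + n1),
      (∑ t : Fin T, if n0 ≤ (i : ℕ) then (if (t : ℕ) = T - 1 then c else 0) else 0) =
        if n0 ≤ (i : ℕ) then c else 0 := by
    intro i
    by_cases hi : n0 ≤ (i : ℕ)
    · simp only [if_pos hi]
      rw [sum_indic_last T (by omega)]
      ring
    · simp [hi]
  rw [Finset.sum_congr rfl (fun i _ => hinner i), sum_indic_le]
  rw [hc]
  field_simp
  ring

/-- for `n0, n1 ≥ 1`, `N = n0 + n1` and `T ≥ 2`, with `M = I - Z (Z'Z)⁻¹ Z'` the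
two-way fixed effects annihilator and `D` the treatment indicator vector (equal to `1` exactly
for units `i > n0` in the last period), the quadratic form `D' M D` equals
`(T-1) n0 n1 / ((n0 + n1) T)`. -/
theorem treatment_quadratic_form (n0 n1 T : ℕ) (hn0 : 1 ≤ n0) (hn1 : 1 ≤ n1) (hT : 2 ≤ T) :
    (fun p : Fin (n0 + n1) × Fin T =>
        if n0 ≤ (p.1 : ℕ) ∧ (p.2 : ℕ) = T - 1 then (1 : ℝ) else 0) ⬝ᵥ
      (((1 : Matrix (Fin (n0 + n1) × Fin T) (Fin (n0 + n1) × Fin T) ℝ) -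
          designZ (n0 + n1) T * ((designZ (n0 + n1) T)ᵀ * designZ (n0 + n1) T)⁻¹ *
            (designZ (n0 + n1) T)ᵀ) *ᵥ
        (fun p : Fin (n0 + n1) × Fin T =>
          if n0 ≤ (p.1 : ℕ) ∧ (p.2 : ℕ) = T - 1 then (1 : ℝ) else 0)) =
      ((T : ℝ) - 1) * n0 * n1 / (((n0 : ℝ) + n1) * T) := by
  set Z := designZ (n0 + n1) T with hZ
  set A := Zᵀ * Z with hA
  have hdet : IsUnit A.det := gram_isUnit_det n0 n1 T hn0 hT
  have h1 : A *ᵥ betaVec n0 n1 T = Zᵀ *ᵥ Dvec n0 n1 T := by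
    rw [hA, ← mulVec_mulVec, key_proj n0 n1 T hn0 hT, key_orth n0 n1 T hn0 hn1 hT]
  have h2 : A⁻¹ *ᵥ (Zᵀ *ᵥ Dvec n0 n1 T) = betaVec n0 n1 T := by
    rw [← h1, mulVec_mulVec, Matrix.nonsing_inv_mul A hdet, one_mulVec]
  have h3 : (Z * A⁻¹ * Zᵀ) *ᵥ Dvec n0 n1 T = dhatVec n0 n1 T := by
    rw [← mulVec_mulVec, ← mulVec_mulVec, h2, key_proj n0 n1 T hn0 hT]
  show Dvec n0 n1 T ⬝ᵥ ((1 - Z * A⁻¹ * Zᵀ) *ᵥ Dvec n0 n1 T) = _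
  rw [sub_mulVec, one_mulVec, h3]
  exact final_value n0 n1 T hn0 hn1 hT
end
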